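/- Let G be a graph of conductance Φ_G with n vertices and let T* be an optimal HC tree of G whose dense branch is (A_0, ..., A_k). If |A_k| ≥ (n-1)/2, then for every HC tree T of G, cost_G(T) ≤ 8 · cost_G(T*)/Φ_G. -/

import Mathlib

open Finset

/-- A hierarchical clustering (HC) tree: a binary tree with vertex-labelled leaves. -/
inductive HCTree (V : Type) where
  | leaf (v : V) : HCTree V
  | node (l r : HCTree V) : HCTree V

namespace HCTree

variable {V : Type} [Fintype V] [DecidableEq V]

/-- The list of leaf labels of an HC tree. -/
def leafList : HCTree V → List V
  | leaf v => [v]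
  | node l r => leafList l ++ leafList r

/-- The set of leaves of an HC tree. -/
def leaves (t : HCTree V) : Finset V := t.leafList.toFinset

/-- Total weight of (ordered) pairs between two vertex sets:
`w(S,T) = ∑_{u ∈ S, v ∈ T} w(u,v)`. -/
def cut (w : V → V → ℝ) (S T : Finset V) : ℝ := ∑ u ∈ S, ∑ v ∈ T, w u v

/-- The (weighted) degree of a vertex: `d_u = ∑_v w(u,v)`. -/
def deg (w : V → V → ℝ) (u : V) : ℝ := ∑ v, w u v

/-- The volume of a vertex set: `vol(S) = ∑_{u ∈ S} d_u`. -/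
def vol (w : V → V → ℝ) (S : Finset V) : ℝ := ∑ u ∈ S, deg w u

/-- Dasgupta's cost of an HC tree, via the equivalent internal-node formula:
`cost(T) = ∑_{N → (N₁,N₂)} |leaves(T[N])| · w(leaves(N₁), leaves(N₂))`. -/
def cost (w : V → V → ℝ) : HCTree V → ℝ
  | leaf _ => 0
  | node l r =>
      ((leaves (node l r)).card : ℝ) * cut w (leaves l) (leaves r)
        + cost w l + cost w r

/-- `t` is an HC tree of the graph on vertex set `V`: its leaves are distinct
and are exactly the vertices of `V`. -/
def isHC (t : HCTree V) : Prop := t.leafList.Nodup ∧ t.leaves = Finset.univ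

end HCTree

namespace HCTree

variable {V : Type} [Fintype V] [DecidableEq V]

/-- `DenseBranch w t k A B` says that `(A 0, …, A k)` is the dense branch of the HC tree `t`,
with `B (i+1)` the sibling of `A (i+1)`: `A 0` is the root, each `A (i+1)` is the child of
`A i` of higher volume, every node on the branch has volume greater than `vol(G)/2`,
and both children of the final node `A k` have volume at most `vol(G)/2`. -/
def DenseBranch (w : V → V → ℝ) (t : HCTree V) (k : ℕ)
    (A B : ℕ → HCTree V) : Prop :=
  A 0 = t ∧
  (∀ i < k,
      (A i = HCTree.node (A (i+1)) (B (i+1)) ∨ A i = HCTree.node (B (i+1)) (A (i+1))) ∧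
      vol w (leaves (B (i+1))) ≤ vol w (leaves (A (i+1)))) ∧
  (∀ i ≤ k, vol w (Finset.univ : Finset V) / 2 < vol w (leaves (A i))) ∧
  (∃ l r, A k = HCTree.node l r ∧
      vol w (leaves l) ≤ vol w (Finset.univ : Finset V) / 2 ∧
      vol w (leaves r) ≤ vol w (Finset.univ : Finset V) / 2)

end HCTree

namespace HCTree

variable {V : Type} [Fintype V] [DecidableEq V]

lemma leaves_node (l r : HCTree V) : leaves (node l r) = leaves l ∪ leaves r := by
  simp [leaves, leafList]

lemma leafList_ne_nil (t : HCTree V) : t.leafList ≠ [] := by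
  induction t with
  | leaf v => simp [leafList]
  | node l r ihl ihr => simp only [leafList]; intro h; exact ihl (List.append_eq_nil_iff.mp h).1

lemma leaves_nonempty (t : HCTree V) : t.leaves.Nonempty := by
  obtain ⟨x, hx⟩ := List.exists_mem_of_ne_nil _ (leafList_ne_nil t)
  exact ⟨x, by simpa [leaves, List.mem_toFinset] using hx⟩

variable (w : V → V → ℝ)

lemma cut_nonneg (hw : ∀ u v, 0 ≤ w u v) (S T : Finset V) : 0 ≤ cut w S T :=
  Finset.sum_nonneg fun _ _ => Finset.sum_nonneg fun _ _ => hw _ _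

lemma cut_comm (hsymm : ∀ u v, w u v = w v u) (S T : Finset V) : cut w S T = cut w T S := by
  unfold cut
  rw [Finset.sum_comm]
  exact Finset.sum_congr rfl fun v _ => Finset.sum_congr rfl fun u _ => hsymm u v

lemma cut_mono_left (hw : ∀ u v, 0 ≤ w u v) {S S' : Finset V} (h : S ⊆ S') (T : Finset V) :
    cut w S T ≤ cut w S' T :=
  Finset.sum_le_sum_of_subset_of_nonneg h fun u _ _ =>
    Finset.sum_nonneg fun v _ => hw u v

lemma cut_union_left {S₁ S₂ : Finset V} (h : Disjoint S₁ S₂) (T : Finset V) :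
    cut w (S₁ ∪ S₂) T = cut w S₁ T + cut w S₂ T :=
  Finset.sum_union h

lemma cut_union_right (S : Finset V) {T₁ T₂ : Finset V} (h : Disjoint T₁ T₂) :
    cut w S (T₁ ∪ T₂) = cut w S T₁ + cut w S T₂ := by
  unfold cut
  rw [← Finset.sum_add_distrib]
  exact Finset.sum_congr rfl fun u _ => Finset.sum_union h

lemma cut_empty_right (S : Finset V) : cut w S ∅ = 0 := by simp [cut]

lemma vol_union {S T : Finset V} (h : Disjoint S T) : vol w (S ∪ T) = vol w S + vol w T :=
  Finset.sum_union h

lemma vol_univ_eq : vol w (Finset.univ : Finset V) = cut w Finset.univ Finset.univ := rfl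

lemma vol_nonneg (hw : ∀ u v, 0 ≤ w u v) (S : Finset V) : 0 ≤ vol w S :=
  Finset.sum_nonneg fun u _ => Finset.sum_nonneg fun v _ => hw u v

lemma cost_nonneg (hw : ∀ u v, 0 ≤ w u v) (t : HCTree V) : 0 ≤ cost w t := by
  induction t with
  | leaf v => simp [cost]
  | node l r ihl ihr =>
    have := cut_nonneg w hw (leaves l) (leaves r)
    simp only [cost]
    positivity

lemma nodup_of_node {l r : HCTree V} (h : (node l r).leafList.Nodup) :
    l.leafList.Nodup ∧ r.leafList.Nodup ∧ Disjoint l.leaves r.leaves := by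
  rw [leafList, List.nodup_append] at h
  exact ⟨h.1, h.2.1, List.disjoint_toFinset_iff_disjoint.mpr (fun a ha hb => h.2.2 a ha a hb rfl)⟩

lemma cost_le_half (hw : ∀ u v, 0 ≤ w u v) (hsymm : ∀ u v, w u v = w v u)
    (t : HCTree V) (h : t.leafList.Nodup) :
    cost w t ≤ (Fintype.card V : ℝ) * cut w t.leaves t.leaves / 2 := by
  induction t with
  | leaf v =>
    have : 0 ≤ cut w (leaves (leaf v)) (leaves (leaf v)) := cut_nonneg w hw _ _
    have hn : (0:ℝ) ≤ (Fintype.card V : ℝ) := by positivity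
    simp only [cost]
    nlinarith
  | node l r ihl ihr =>
    obtain ⟨h1, h2, hdis⟩ := nodup_of_node h
    have il := ihl h1
    have ir := ihr h2
    have hcardle : ((leaves (node l r)).card : ℝ) ≤ (Fintype.card V : ℝ) := by
      exact_mod_cast Finset.card_le_univ _
    have hLR : 0 ≤ cut w (leaves l) (leaves r) := cut_nonneg w hw _ _
    have hexp : cut w (leaves (node l r)) (leaves (node l r))
        = cut w (leaves l) (leaves l) + cut w (leaves r) (leaves r)
          + 2 * cut w (leaves l) (leaves r) := by
      rw [leaves_node, cut_union_left w hdis, cut_union_right w _ hdis,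
        cut_union_right w _ hdis, cut_comm w hsymm (leaves r) (leaves l)]
      ring
    simp only [cost]
    rw [hexp]
    nlinarith [Finset.card_le_univ (leaves (node l r))]

end HCTree

open HCTree in
/-- Let `G` be a graph of conductance `Φ_G` with `n` vertices and `T*` an
optimal HC tree of `G` whose dense branch is `(A_0, …, A_k)`. If `|A_k| ≥ (n-1)/2`, then
every HC tree `T` of `G` satisfies `cost_G(T) ≤ 8 · cost_G(T*)/Φ_G`. -/
theorem cost_le_eight_opt_div_phi {V : Type} [Fintype V] [DecidableEq V]
    (w : V → V → ℝ) (hw : ∀ u v, 0 ≤ w u v) (hsymm : ∀ u v, w u v = w v u)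
    (Φ : ℝ) (hΦ0 : 0 < Φ)
    (hΦ : ∀ S : Finset V, S.Nonempty → vol w S ≤ vol w (Finset.univ : Finset V) / 2 →
      Φ * vol w S ≤ cut w S Sᶜ)
    (Tstar : HCTree V) (hTstar : isHC Tstar)
    (hopt : ∀ t : HCTree V, isHC t → cost w Tstar ≤ cost w t)
    (k : ℕ) (A B : ℕ → HCTree V) (hdb : DenseBranch w Tstar k A B)
    (hAk : ((Fintype.card V : ℝ) - 1) / 2 ≤ ((leaves (A k)).card : ℝ))
    (T : HCTree V) (hT : isHC T) :
    cost w T ≤ 8 * cost w Tstar / Φ := by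
  obtain ⟨hA0, hstep, hvolbig, l, r, hAkeq, hvl, hvr⟩ := hdb
  set n : ℝ := (Fintype.card V : ℝ) with hn
  set volU : ℝ := vol w (Finset.univ : Finset V) with hvolU
  -- Nodup along the branch
  have hnodup : ∀ i ≤ k, (A i).leafList.Nodup := by
    intro i hi
    induction i with
    | zero => rw [hA0]; exact hTstar.1
    | succ j ih =>
      have hj : j < k := hi
      have hnd := ih (le_of_lt hj)
      rcases (hstep j hj).1 with h | h
      · rw [h] at hnd; exact (nodup_of_node hnd).1
      · rw [h] at hnd; exact (nodup_of_node hnd).2.1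
  -- subset step
  have hsubstep : ∀ j < k, leaves (A (j+1)) ⊆ leaves (A j) := by
    intro j hj
    rcases (hstep j hj).1 with h | h <;> rw [h, leaves_node]
    · exact Finset.subset_union_left
    · exact Finset.subset_union_right
  have hsubaux : ∀ d, ∀ i, i + d = k → leaves (A k) ⊆ leaves (A i) := by
    intro d
    induction d with
    | zero => intro i h; rw [show i = k by omega]
    | succ d ih =>
      intro i h
      exact (ih (i+1) (by omega)).trans (hsubstep i (by omega))
  have hsubk : ∀ i ≤ k, leaves (A k) ⊆ leaves (A i) := fun i hi =>
    hsubaux (k - i) i (by omega)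
  have hsubuniv : ∀ i ≤ k, leaves (A i) ⊆ Finset.univ := fun i _ => Finset.subset_univ _
  -- notation
  set S : Finset V := leaves (A k) with hS
  set c : ℝ := (S.card : ℝ) with hc
  set clr : ℝ := cut w (leaves l) (leaves r) with hclr
  have hc0 : 0 ≤ c := by positivity
  -- main lower bound along the branch
  have hP : ∀ i ≤ k, c * (cut w S (leaves (A (k - i)) \ S) + clr) ≤ cost w (A (k - i)) := by
    intro i hi
    induction i with
    | zero =>
      simp only [Nat.sub_zero]
      rw [show leaves (A k) \ S = ∅ by simp [hS], cut_empty_right, zero_add, hAkeq]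
      have h1 : 0 ≤ cost w l := cost_nonneg w hw l
      have h2 : 0 ≤ cost w r := cost_nonneg w hw r
      have hcard : ((leaves (node l r)).card : ℝ) = c := by rw [hc, hS, hAkeq]
      simp only [cost]
      rw [hcard]
      linarith
    | succ i ih =>
      have hik : i < k := hi
      set j := k - (i+1) with hj
      have hkj : k - i = j + 1 := by omega
      have hjk : j < k := by omega
      have IH := ih (le_of_lt hik)
      rw [hkj] at IH
      -- structure at node j
      have hndj := hnodup j (le_of_lt hjk)
      have hSsub : S ⊆ leaves (A (j+1)) := hsubk (j+1) (by omega)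
      have key : ∀ (X : HCTree V), A j = node (A (j+1)) X ∨ A j = node X (A (j+1)) →
          c * (cut w S (leaves (A j) \ S) + clr) ≤ cost w (A j) := by
        intro X hcase
        have hdisj : Disjoint (leaves (A (j+1))) (leaves X) := by
          rcases hcase with h | h <;> rw [h] at hndj
          · exact (nodup_of_node hndj).2.2
          · exact ((nodup_of_node hndj).2.2).symm
        have hlv : leaves (A j) = leaves (A (j+1)) ∪ leaves X := by
          rcases hcase with h | h
          · rw [h, leaves_node]
          · rw [h, leaves_node]; exact Finset.union_comm _ _
        have hcut : cut w S (leaves X) ≤ cut w (leaves (A (j+1))) (leaves X) :=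
          cut_mono_left w hw hSsub _
        have hXS : Disjoint (leaves X) S := hdisj.symm.mono_right hSsub
        have hsplit : leaves (A j) \ S = (leaves (A (j+1)) \ S) ∪ leaves X := by
          rw [hlv, Finset.union_sdiff_distrib, Finset.sdiff_eq_self_of_disjoint hXS]
        have hdisj2 : Disjoint (leaves (A (j+1)) \ S) (leaves X) :=
          hdisj.mono_left Finset.sdiff_subset
        have hcutsplit : cut w S (leaves (A j) \ S)
            = cut w S (leaves (A (j+1)) \ S) + cut w S (leaves X) := by
          rw [hsplit, cut_union_right w _ hdisj2]
        have hcostj : cost w (A j) = ((leaves (A j)).card : ℝ)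
            * cut w (leaves (A (j+1))) (leaves X) + cost w (A (j+1)) + cost w X := by
          rcases hcase with h | h
          · rw [h]; simp only [cost]
          · rw [h]; simp only [cost]
            rw [cut_comm w hsymm (leaves X) (leaves (A (j+1)))]; ring
        have hcardj : c ≤ ((leaves (A j)).card : ℝ) := by
          have := Finset.card_le_card (hsubk j (le_of_lt hjk))
          rw [hc]; exact_mod_cast this
        have hcX : 0 ≤ cost w X := cost_nonneg w hw X
        have hSX0 : 0 ≤ cut w S (leaves X) := cut_nonneg w hw _ _
        have : c * cut w S (leaves X) ≤ ((leaves (A j)).card : ℝ)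
            * cut w (leaves (A (j+1))) (leaves X) := by
          apply mul_le_mul hcardj (hcut.trans_eq' rfl) hSX0 (le_trans hc0 hcardj)
        rw [hcostj, hcutsplit]
        nlinarith [hcut]
      rcases (hstep j hjk).1 with h | h
      · exact key _ (Or.inl h)
      · exact key _ (Or.inr h)
  -- at the root
  have hroot := hP k le_rfl
  rw [Nat.sub_self, hA0, hTstar.2] at hroot
  have hcompl : Finset.univ \ S = Sᶜ := by
    ext x; simp
  rw [hcompl] at hroot
  -- conductance bound
  have hndk := hnodup k le_rfl
  rw [hAkeq] at hndk
  obtain ⟨hndl, hndr, hdlr⟩ := nodup_of_node hndk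
  have hSlr : S = leaves l ∪ leaves r := by rw [hS, hAkeq, leaves_node]
  have hvolS : vol w S = vol w (leaves l) + vol w (leaves r) := by
    rw [hSlr, vol_union w hdlr]
  have hΦl := hΦ (leaves l) (leaves_nonempty l) hvl
  have hΦr := hΦ (leaves r) (leaves_nonempty r) hvr
  -- complements
  have hcompl_l : (leaves l)ᶜ = leaves r ∪ Sᶜ := by
    ext x
    simp only [Finset.mem_compl, Finset.mem_union, hSlr, Finset.mem_union]
    constructor
    · intro hx; by_cases h : x ∈ leaves r
      · exact Or.inl h
      · exact Or.inr (by push_neg; exact ⟨hx, h⟩)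
    · rintro (h | h)
      · exact fun hl => Finset.disjoint_left.mp hdlr hl h
      · intro hl; exact h (Or.inl hl)
  have hcompl_r : (leaves r)ᶜ = leaves l ∪ Sᶜ := by
    ext x
    simp only [Finset.mem_compl, Finset.mem_union, hSlr, Finset.mem_union]
    constructor
    · intro hx; by_cases h : x ∈ leaves l
      · exact Or.inl h
      · exact Or.inr (by push_neg; exact ⟨h, hx⟩)
    · rintro (h | h)
      · exact fun hr => Finset.disjoint_left.mp hdlr h hr
      · intro hr; exact h (Or.inr hr)
  have hdr : Disjoint (leaves r) Sᶜ := by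
    apply Disjoint.mono_left (show leaves r ⊆ S from hSlr ▸ Finset.subset_union_right)
    exact disjoint_compl_right
  have hdl : Disjoint (leaves l) Sᶜ := by
    apply Disjoint.mono_left (show leaves l ⊆ S from hSlr ▸ Finset.subset_union_left)
    exact disjoint_compl_right
  have hcl : cut w (leaves l) (leaves l)ᶜ = clr + cut w (leaves l) Sᶜ := by
    rw [hcompl_l, cut_union_right w _ hdr]
  have hcr : cut w (leaves r) (leaves r)ᶜ
      = cut w (leaves l) (leaves r) + cut w (leaves r) Sᶜ := by
    rw [hcompl_r, cut_union_right w _ hdl, cut_comm w hsymm (leaves r) (leaves l)]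
  have hcS : cut w S Sᶜ = cut w (leaves l) Sᶜ + cut w (leaves r) Sᶜ := by
    rw [hSlr, cut_union_left w hdlr]
  have hcond : Φ * vol w S ≤ 2 * (cut w S Sᶜ + clr) := by
    have h0 : 0 ≤ cut w S Sᶜ := cut_nonneg w hw _ _
    have h1 : 0 ≤ clr := cut_nonneg w hw _ _
    rw [hvolS]
    nlinarith [hΦl, hΦr, hcl, hcr, hcS]
  -- cost upper bound for T
  have hTub : cost w T ≤ n * volU / 2 := by
    have := cost_le_half w hw hsymm T hT.1
    rw [hT.2] at this
    rw [hvolU, hn, vol_univ_eq]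
    exact this
  -- cardinality facts
  have hcn : c ≤ n := by
    rw [hc, hn]; exact_mod_cast Finset.card_le_univ S
  have hn2 : (2:ℝ) ≤ n := by
    have h2 : 2 ≤ S.card := by
      rw [hS, hAkeq, leaves, List.toFinset_card_of_nodup hndk, leafList, List.length_append]
      have := List.length_pos_iff.mpr (leafList_ne_nil l)
      have := List.length_pos_iff.mpr (leafList_ne_nil r)
      omega
    have : (2:ℝ) ≤ c := by rw [hc]; exact_mod_cast h2
    linarith
  have hvolS2 : volU / 2 < vol w S := hvolbig k le_rfl
  have hvolU0 : 0 ≤ volU := vol_nonneg w hw _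
  -- combine
  rw [le_div_iff₀ hΦ0]
  have hgoal : cost w T * Φ ≤ 8 * cost w Tstar := by
    have h1 : c * (Φ * vol w S) ≤ 2 * cost w Tstar := by
      have hm := mul_le_mul_of_nonneg_left hcond hc0
      have he : c * (2 * (cut w S Sᶜ + clr)) = 2 * (c * (cut w S Sᶜ + clr)) := by ring
      linarith
    have hc4 : n / 4 ≤ c := by linarith
    have h2 : Φ * (n / 4) * (volU / 2) ≤ 2 * cost w Tstar := by
      have hv : Φ * (volU / 2) ≤ Φ * vol w S :=
        mul_le_mul_of_nonneg_left (le_of_lt hvolS2) (le_of_lt hΦ0)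
      have hx : (n/4) * (Φ * (volU/2)) ≤ c * (Φ * vol w S) := by
        apply mul_le_mul hc4 hv (by positivity) hc0
      have he : Φ * (n/4) * (volU/2) = (n/4) * (Φ * (volU/2)) := by ring
      linarith
    have h3 : cost w T * Φ ≤ (n * volU / 2) * Φ :=
      mul_le_mul_of_nonneg_right hTub (le_of_lt hΦ0)
    calc cost w T * Φ ≤ (n * volU / 2) * Φ := h3
      _ = 4 * (Φ * (n/4) * (volU/2)) := by ring
      _ ≤ 4 * (2 * cost w Tstar) := by linarith
      _ = 8 * cost w Tstar := by ring
  exact hgoal
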